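/- arXiv:2011.11119 — 5 statements merged into one kernel-verified Lean document; each statement's English description precedes it below -/
import Mathlib

section
/- For all integers n ≥ 4k with k ≥ 1, there exists a 2-coloring E(K_n) = R ⊔ B with |R| = (k-1)n - (k-1)² , |B| ≥ |R|, and such that no copy of the cycle C_{4k} in K_n has exactly 2k edges in R and 2k edges in B. -/
open Finset

/-- For n ≥ 4k, k ≥ 1, there is a 2-coloring E(K_n) = R ⊔ B with
|R| = (k-1)n - (k-1)², |B| ≥ |R|, and no copy of C_{4k} with 2k edges in each color. -/
theorem stmt_3 (k n : ℕ) (hk : 1 ≤ k) (hn : 4 * k ≤ n) :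
    ∃ R B : Finset (Sym2 (Fin n)), Disjoint R B ∧
      R ∪ B = (⊤ : SimpleGraph (Fin n)).edgeFinset ∧
      R.card = (k - 1) * n - (k - 1) ^ 2 ∧ R.card ≤ B.card ∧
      ¬ ∃ f : ℕ → Fin n, Set.InjOn f (Set.Iio (4 * k)) ∧
        ((Finset.range (4 * k)).filter
          (fun i => s(f i, f ((i + 1) % (4 * k))) ∈ R)).card = 2 * k ∧
        ((Finset.range (4 * k)).filter
          (fun i => s(f i, f ((i + 1) % (4 * k))) ∈ B)).card = 2 * k := by
  set m := k - 1 with hm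
  have hmn : 4 * m + 4 ≤ n := by omega
  -- the "cross" predicate on edges
  let cross : Sym2 (Fin n) → Bool :=
    Sym2.lift ⟨fun a b => xor (decide (a.val < m)) (decide (b.val < m)),
      fun a b => Bool.xor_comm _ _⟩
  have cross_mk : ∀ a b : Fin n,
      cross s(a, b) = xor (decide (a.val < m)) (decide (b.val < m)) := fun a b => rfl
  set E := (⊤ : SimpleGraph (Fin n)).edgeFinset with hE
  set R := E.filter (fun e => cross e = true) with hRdef
  set B := E.filter (fun e => ¬ cross e = true) with hBdef
  -- card of V₁
  have hcard1 : (univ.filter (fun v : Fin n => v.val < m)).card = m := by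
    have := Finset.card_bij' (s := univ.filter (fun v : Fin n => v.val < m))
      (t := Finset.range m) (fun v _ => v.val)
      (fun i hi => (⟨i, lt_of_lt_of_le (Finset.mem_range.mp hi) (by omega)⟩ : Fin n))
      (fun a ha => Finset.mem_range.mpr (Finset.mem_filter.mp ha).2)
      (fun i hi => Finset.mem_filter.mpr ⟨Finset.mem_univ _, Finset.mem_range.mp hi⟩)
      (fun a _ => rfl) (fun i _ => rfl)
    simpa using this
  have hcard2 : (univ.filter (fun v : Fin n => ¬ v.val < m)).card = n - m := by
    have h := Finset.card_filter_add_card_filter_not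
      (s := (univ : Finset (Fin n))) (p := fun v : Fin n => v.val < m)
    rw [hcard1] at h
    simp only [Finset.card_univ, Fintype.card_fin] at h
    omega
  -- R as an image
  have himg : R = Finset.image (fun p : Fin n × Fin n => s(p.1, p.2))
      ((univ.filter (fun v : Fin n => v.val < m)) ×ˢ
       (univ.filter (fun v : Fin n => ¬ v.val < m))) := by
    ext e
    induction e using Sym2.ind with
    | _ a b =>
      simp only [hRdef, hE, Finset.mem_filter, SimpleGraph.mem_edgeFinset,
        SimpleGraph.mem_edgeSet, SimpleGraph.top_adj, Finset.mem_image,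
        Finset.mem_product, cross_mk, Prod.exists,
        Finset.mem_filter, Finset.mem_univ, true_and]
      constructor
      · rintro ⟨hab, hx⟩
        by_cases ha : a.val < m <;> by_cases hb : b.val < m
        · simp [ha, hb] at hx
        · exact ⟨a, b, ⟨ha, hb⟩, rfl⟩
        · exact ⟨b, a, ⟨hb, ha⟩, Sym2.eq_swap⟩
        · simp [ha, hb] at hx
      · rintro ⟨x, y, ⟨hx, hy⟩, he⟩
        rw [Sym2.eq_iff] at he
        constructor
        · rintro rfl
          rcases he with ⟨rfl, rfl⟩ | ⟨rfl, rfl⟩ <;> exact hy hx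
        · rcases he with ⟨rfl, rfl⟩ | ⟨rfl, rfl⟩ <;> simp [hx, hy]
  have hinj : Set.InjOn (fun p : Fin n × Fin n => s(p.1, p.2))
      (↑((univ.filter (fun v : Fin n => v.val < m)) ×ˢ
       (univ.filter (fun v : Fin n => ¬ v.val < m))) : Set (Fin n × Fin n)) := by
    rintro ⟨a, b⟩ hab ⟨c, d⟩ hcd he
    simp only [Finset.coe_product, Set.mem_prod, Finset.coe_filter, Set.mem_setOf_eq,
      Finset.mem_univ, true_and] at hab hcd
    simp only [Sym2.eq_iff] at he
    rcases he with ⟨rfl, rfl⟩ | ⟨rfl, rfl⟩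
    · rfl
    · exact absurd hab.1 hcd.2
  have hRm : R.card = m * (n - m) := by
    rw [himg, Finset.card_image_of_injOn hinj, Finset.card_product, hcard1, hcard2]
  have hRval : R.card = m * n - m ^ 2 := by
    rw [hRm, pow_two]
    have h1 : n - m + m = n := by omega
    calc m * (n - m) = m * ((n - m) + m) - m * m := by ring_nf; omega
      _ = m * n - m * m := by rw [h1]
  have hsum : R.card + B.card = E.card :=
    Finset.card_filter_add_card_filter_not (p := fun e => cross e = true)
  have hEcard : E.card = n.choose 2 := by
    rw [hE, SimpleGraph.card_edgeFinset_top_eq_card_choose_two, Fintype.card_fin]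
  refine ⟨R, B, Finset.disjoint_filter_filter_not E E _,
    Finset.filter_union_filter_not_eq _ E, by rw [hRval], ?_, ?_⟩
  · -- |R| ≤ |B|
    have hch : n.choose 2 = n * (n - 1) / 2 := Nat.choose_two_right n
    obtain ⟨t, ht⟩ : ∃ t, n = 4 * m + 4 + t := ⟨n - (4 * m + 4), by omega⟩
    have e1 : n - m = 3 * m + 4 + t := by omega
    have e2 : n - 1 = 4 * m + 3 + t := by omega
    have key : 4 * (m * (n - m)) ≤ n * (n - 1) := by
      rw [e1, e2, ht]; nlinarith
    have key2 : 2 * (m * (n - m)) ≤ n * (n - 1) / 2 := by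
      have := Nat.div_le_div_right (c := 2) key
      omega
    omega
  · -- no balanced cycle
    rintro ⟨f, hf, hRc, hBc⟩
    set N := 4 * k with hN
    set S := (Finset.range N).filter (fun i => (f i).val < m) with hS
    have hScard : S.card ≤ m := by
      have hsub : ∀ i ∈ S, f i ∈ univ.filter (fun v : Fin n => v.val < m) := by
        intro i hi
        exact Finset.mem_filter.mpr ⟨Finset.mem_univ _, (Finset.mem_filter.mp hi).2⟩
      have hinjS : Set.InjOn f S := fun a ha b hb hab =>
        hf (Set.mem_Iio.mpr (Finset.mem_range.mp (Finset.mem_filter.mp ha).1))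
           (Set.mem_Iio.mpr (Finset.mem_range.mp (Finset.mem_filter.mp hb).1)) hab
      have := Finset.card_le_card_of_injOn f hsub hinjS
      omega
    set T := (Finset.range N).filter (fun i => (f ((i + 1) % N)).val < m) with hT
    have hTcard : T.card ≤ S.card := by
      apply Finset.card_le_card_of_injOn (fun i => (i + 1) % N)
      · intro i hi
        rcases Finset.mem_filter.mp hi with ⟨hi1, hi2⟩
        exact Finset.mem_filter.mpr ⟨Finset.mem_range.mpr
          (Nat.mod_lt _ (by omega)), hi2⟩
      · intro a ha b hb hab
        simp only [hT, Finset.coe_filter, Set.mem_setOf_eq, Finset.mem_range] at ha hb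
        have key : ∀ x, x < N → (x + 1) % N = if x + 1 = N then 0 else x + 1 := by
          intro x hx
          split_ifs with h
          · rw [h, Nat.mod_self]
          · exact Nat.mod_eq_of_lt (by omega)
        have hab' : (a + 1) % N = (b + 1) % N := hab
        rw [key a ha.1, key b hb.1] at hab'
        split_ifs at hab' <;> omega
    have hsub : (Finset.range N).filter
        (fun i => s(f i, f ((i + 1) % N)) ∈ R) ⊆ S ∪ T := by
      intro i hi
      rcases Finset.mem_filter.mp hi with ⟨hi1, hi2⟩
      rcases Finset.mem_filter.mp hi2 with ⟨_, hc⟩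
      rw [cross_mk] at hc
      by_cases h1 : (f i).val < m
      · exact Finset.mem_union_left _ (Finset.mem_filter.mpr ⟨hi1, h1⟩)
      · refine Finset.mem_union_right _ (Finset.mem_filter.mpr ⟨hi1, ?_⟩)
        by_contra h2
        simp [h1, h2] at hc
    have h1 := Finset.card_le_card hsub
    have h2 := Finset.card_union_le S T
    rw [hRc] at h1
    omega
end

section
/- Let k ≥ 1 and n ≥ 4k. In the 2-coloring of K_n obtained by partitioning V(K_n) = V₁ ⊔ V₂ with |V₁| = k-1, coloring edges between V₁ and V₂ red and all other edges blue, every cycle of length 4k contains at most 2k - 2 red edges. -/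
/-- In the coloring where red edges are exactly those between V₁
(of size k-1) and its complement, every cycle of length 4k has at most 2k-2 red edges. -/
theorem stmt_4 (k n : ℕ) (hk : 1 ≤ k) (hn : 4 * k ≤ n)
    (V₁ : Finset (Fin n)) (hV₁ : V₁.card = k - 1)
    (f : ℕ → Fin n) (hf : Set.InjOn f (Set.Iio (4 * k))) :
    ((Finset.range (4 * k)).filter
      (fun i => (f i ∈ V₁ ∧ f ((i + 1) % (4 * k)) ∉ V₁) ∨
                (f i ∉ V₁ ∧ f ((i + 1) % (4 * k)) ∈ V₁))).card ≤ 2 * k - 2 := by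
  set m := 4 * k with hm
  have hm0 : 0 < m := by omega
  set S := (Finset.range m).filter (fun j => f j ∈ V₁) with hS
  have hScard : S.card ≤ k - 1 := by
    rw [← hV₁]
    apply Finset.card_le_card_of_injOn f
    · intro j hj
      exact (Finset.mem_filter.mp hj).2
    · intro a ha b hb hab
      apply hf
      · exact Set.mem_Iio.mpr (Finset.mem_range.mp (Finset.mem_filter.mp ha).1)
      · exact Set.mem_Iio.mpr (Finset.mem_range.mp (Finset.mem_filter.mp hb).1)
      · exact hab
  set R := (Finset.range m).filter
      (fun i => (f i ∈ V₁ ∧ f ((i + 1) % m) ∉ V₁) ∨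
                (f i ∉ V₁ ∧ f ((i + 1) % m) ∈ V₁)) with hR
  set g : ℕ → ℕ := fun i => if f i ∈ V₁ then i else (i + 1) % m with hg
  have himg : R.image g ⊆ S := by
    intro a ha
    obtain ⟨i, hi, rfl⟩ := Finset.mem_image.mp ha
    obtain ⟨hi1, hi2⟩ := Finset.mem_filter.mp hi
    simp only [hg]
    by_cases h : f i ∈ V₁
    · simp only [h, if_true]
      exact Finset.mem_filter.mpr ⟨hi1, h⟩
    · simp only [h, if_false]
      refine Finset.mem_filter.mpr ⟨Finset.mem_range.mpr (Nat.mod_lt _ hm0), ?_⟩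
      rcases hi2 with ⟨h1, _⟩ | ⟨_, h2⟩
      · exact absurd h1 h
      · exact h2
  have hfib : ∀ a ∈ R.image g, (R.filter fun x => g x = a).card ≤ 2 := by
    intro a _
    have hsub : (R.filter fun x => g x = a) ⊆ {a, (a + m - 1) % m} := by
      intro i hi
      obtain ⟨hiR, hgi⟩ := Finset.mem_filter.mp hi
      have hilt : i < m := Finset.mem_range.mp (Finset.mem_filter.mp hiR).1
      simp only [hg] at hgi
      by_cases h : f i ∈ V₁
      · simp only [h, if_true] at hgi
        simp [hgi]
      · simp only [h, if_false] at hgi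
        rw [Finset.mem_insert, Finset.mem_singleton]
        right
        rcases Nat.lt_or_ge (i + 1) m with h1 | h1
        · rw [Nat.mod_eq_of_lt h1] at hgi
          subst hgi
          have : i + 1 + m - 1 = i + m := by omega
          rw [this, Nat.add_mod_right, Nat.mod_eq_of_lt hilt]
        · have him : i + 1 = m := by omega
          rw [him, Nat.mod_self] at hgi
          subst hgi
          rw [Nat.zero_add, Nat.mod_eq_of_lt (by omega)]
          omega
    calc (R.filter fun x => g x = a).card ≤ ({a, (a + m - 1) % m} : Finset ℕ).card :=
          Finset.card_le_card hsub
      _ ≤ 2 := Finset.card_insert_le _ _ |>.trans (by simp)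
  have := Finset.card_le_mul_card_image R 2 hfib
  have h2 : (R.image g).card ≤ k - 1 := le_trans (Finset.card_le_card himg) hScard
  calc R.card ≤ 2 * (R.image g).card := this
    _ ≤ 2 * (k - 1) := by omega
    _ ≤ 2 * k - 2 := by omega
end

section
/- Let G be a graph on n vertices whose edge set is partitioned into V(G) = X ∪ Y with all edges inside X colored red, all edges inside Y and between X and Y colored blue, except that a set M of edges inside Y spanning a graph of girth at least 6 is bicolored (belongs to both color classes). Then no copy of K₅ in G admits a partition of its 10 edges into 5 red-available and 5 blue-available edges; i.e., there is no balanced copy of K₅. -/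
/-- `G` contains a cycle of length `m`. -/
def HasNCycle {V : Type} (G : SimpleGraph V) (m : ℕ) : Prop :=
  ∃ f : ℕ → V, Set.InjOn f (Set.Iio m) ∧ ∀ i < m, G.Adj (f i) (f ((i + 1) % m))

open SimpleGraph

lemma path_getVert_inj {V : Type} {G : SimpleGraph V} {u v : V} (p : G.Walk u v)
    (hp : p.IsPath) : ∀ i j, i ≤ p.length → j ≤ p.length → p.getVert i = p.getVert j → i = j := by
  induction p with
  | nil => intro i j hi hj _; simp at hi hj; omega
  | @cons u w v h q ih =>
    rw [SimpleGraph.Walk.cons_isPath_iff] at hp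
    intro i j hi hj hij
    match i, j with
    | 0, 0 => rfl
    | 0, (j+1) =>
      exfalso
      apply hp.2
      rw [SimpleGraph.Walk.mem_support_iff_exists_getVert]
      refine ⟨j, ?_, by simpa using hj⟩
      simp only [Walk.getVert_cons_succ, Walk.getVert_zero] at hij
      rw [← hij]
    | (i+1), 0 =>
      exfalso
      apply hp.2
      rw [SimpleGraph.Walk.mem_support_iff_exists_getVert]
      refine ⟨i, ?_, by simpa using hi⟩
      simp only [Walk.getVert_cons_succ, Walk.getVert_zero] at hij
      rw [hij]
    | (i+1), (j+1) =>
      simp only [Walk.getVert_cons_succ] at hij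
      have := ih hp.1 i j (by simpa using hi) (by simpa using hj) hij
      omega

lemma cycle_hasNCycle {V : Type} {G : SimpleGraph V} {u : V} {c : G.Walk u u}
    (hc : c.IsCycle) : HasNCycle G c.length := by
  cases c with
  | nil => exact absurd hc (Walk.IsCycle.not_of_nil)
  | @cons u w _ h q =>
    rw [Walk.cons_isCycle_iff] at hc
    refine ⟨fun i => (Walk.cons h q).getVert i, ?_, ?_⟩
    · intro i hi j hj hij
      simp only [Set.mem_Iio, Walk.length_cons] at hi hj
      match i, j with
      | 0, 0 => rfl
      | 0, (j+1) =>
        exfalso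
        simp only [Walk.getVert_cons_succ, Walk.getVert_zero] at hij
        have : q.getVert q.length = q.getVert j := by rw [Walk.getVert_length]; exact hij
        have := path_getVert_inj q hc.1 q.length j le_rfl (by omega) this
        omega
      | (i+1), 0 =>
        exfalso
        simp only [Walk.getVert_cons_succ, Walk.getVert_zero] at hij
        have : q.getVert q.length = q.getVert i := by rw [Walk.getVert_length]; exact hij.symm
        have := path_getVert_inj q hc.1 q.length i le_rfl (by omega) this
        omega
      | (i+1), (j+1) =>
        simp only [Walk.getVert_cons_succ] at hij
        have := path_getVert_inj q hc.1 i j (by omega) (by omega) hij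
        omega
    · intro i hi
      simp only [Walk.length_cons] at hi
      have hadj := Walk.adj_getVert_succ (Walk.cons h q) (i := i)
        (by rw [Walk.length_cons]; omega)
      show G.Adj ((Walk.cons h q).getVert i)
        ((Walk.cons h q).getVert ((i + 1) % (Walk.cons h q).length))
      rcases Nat.lt_or_ge (i+1) (q.length + 1) with h' | h'
      · have : (i + 1) % (Walk.cons h q).length = i + 1 := by
          rw [Walk.length_cons]; exact Nat.mod_eq_of_lt h'
        rw [this]; exact hadj
      · have : (i + 1) % (Walk.cons h q).length = 0 := by
          rw [Walk.length_cons]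
          have h3 : i + 1 = q.length + 1 := by omega
          rw [h3, Nat.mod_self]
        rw [this]
        have h2 : (Walk.cons h q).getVert 0 = (Walk.cons h q).getVert (i+1) := by
          rw [Walk.getVert_zero]
          have hl := (Walk.cons h q).getVert_length
          rw [Walk.length_cons] at hl
          have : i + 1 = q.length + 1 := by omega
          rw [this]; exact hl.symm
        rw [h2]; exact hadj

lemma cycle_length_le {V : Type} [Fintype V] {G : SimpleGraph V} {u : V} {c : G.Walk u u}
    (hc : c.IsCycle) : c.length ≤ Fintype.card V := by
  have h1 : c.support.tail.Nodup := hc.2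
  have h2 : c.support.tail.length = c.length := by
    have := c.length_support; simp [List.length_tail, this]
  rw [← h2]
  exact h1.length_le_card

lemma acyclic_aux {V : Type} [Fintype V] [Nonempty V] :
    ∀ (k : ℕ) (G : SimpleGraph V), Fintype.card (Sym2 V) ≤ G.edgeSet.ncard + k →
      G.IsAcyclic → G.edgeSet.ncard + 1 ≤ Fintype.card V := by
  classical
  intro k
  induction k with
  | zero =>
    intro G hk _
    exfalso
    obtain ⟨v⟩ := ‹Nonempty V›
    have hsub : G.edgeSet ⊂ Set.univ := by
      refine Set.ssubset_univ_iff.mpr ?_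
      intro h
      have : s(v, v) ∈ G.edgeSet := h ▸ Set.mem_univ _
      simp at this
    have := Set.ncard_lt_ncard hsub (Set.finite_univ)
    rw [Set.ncard_univ, Nat.card_eq_fintype_card] at this
    omega
  | succ k ih =>
    intro G hk hG
    by_cases hc : G.Connected
    · have ht : G.IsTree := ⟨hc, hG⟩
      have hfin : Fintype G.edgeSet := Set.Finite.fintype (Set.toFinite _)
      have := ht.card_edgeFinset
      rw [show G.edgeFinset = G.edgeSet.toFinset from rfl] at this
      rw [Set.ncard_eq_toFinset_card']
      omega
    · have hpre : ¬ G.Preconnected := fun h => hc ⟨h⟩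
      rw [SimpleGraph.Preconnected] at hpre
      push_neg at hpre
      obtain ⟨u, v, huv⟩ := hpre
      have hne : u ≠ v := fun h => huv (h ▸ Reachable.refl u)
      have hnadj : ¬ G.Adj u v := fun h => huv h.reachable
      set G' := G ⊔ fromEdgeSet {s(u, v)} with hG'
      have hle : G ≤ G' := le_sup_left
      have hedge : G'.edgeSet = insert s(u, v) G.edgeSet := by
        rw [hG', edgeSet_sup, edgeSet_fromEdgeSet]
        ext e
        simp only [Set.mem_union, Set.mem_diff, Set.mem_singleton_iff, Set.mem_setOf_eq,
          Set.mem_insert_iff]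
        constructor
        · rintro (h | ⟨rfl, -⟩)
          · exact Or.inr h
          · exact Or.inl rfl
        · rintro (rfl | h)
          · exact Or.inr ⟨rfl, by simp [Sym2.mk_isDiag_iff, hne]⟩
          · exact Or.inl h
      have hmem : s(u, v) ∉ G.edgeSet := fun h => hnadj h
      have hcard : G'.edgeSet.ncard = G.edgeSet.ncard + 1 := by
        rw [hedge, Set.ncard_insert_of_notMem hmem (Set.toFinite _)]
      have hsd : G' \ fromEdgeSet {s(u, v)} = G := by
        ext a b
        simp only [sdiff_adj, hG', sup_adj, fromEdgeSet_adj, Set.mem_singleton_iff]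
        constructor
        · rintro ⟨h1 | ⟨h1, h1'⟩, h2⟩
          · exact h1
          · exact absurd ⟨h1, h1'⟩ h2
        · intro h
          refine ⟨Or.inl h, ?_⟩
          rintro ⟨heq, -⟩
          rw [Sym2.eq_iff] at heq
          rcases heq with ⟨rfl, rfl⟩ | ⟨rfl, rfl⟩
          · exact hnadj h
          · exact hnadj h.symm
      have hG'ac : G'.IsAcyclic := by
        intro w c hcyc
        by_cases he : s(u, v) ∈ c.edges
        · have hreach : (G' \ fromEdgeSet {s(u, v)}).Reachable u v :=
            ((adj_and_reachable_delete_edges_iff_exists_cycle).2 ⟨w, c, hcyc, he⟩).2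
          rw [hsd] at hreach
          exact huv hreach
        · have hsub : ∀ e ∈ c.edges, e ∈ G.edgeSet := by
            intro e he'
            have := c.edges_subset_edgeSet he'
            rw [hedge, Set.mem_insert_iff] at this
            rcases this with rfl | h
            · exact absurd he' he
            · exact h
          exact hG (c.transfer G hsub) (hcyc.transfer hsub)
      have hkG' : Fintype.card (Sym2 V) ≤ G'.edgeSet.ncard + k := by omega
      have := ih G' hkG' hG'ac
      omega

lemma acyclic_bound {V : Type} [Fintype V] [Nonempty V] (G : SimpleGraph V)
    (hG : G.IsAcyclic) : G.edgeSet.ncard + 1 ≤ Fintype.card V :=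
  acyclic_aux (Fintype.card (Sym2 V)) G (by omega) hG

/-- In the 2-list coloring of K_n where edges inside X are red, edges
of a girth-≥6 graph M inside Y = Xᶜ are bicolored, and all other edges are blue,
there is no balanced copy of K₅ (no copy of K₅ whose 10 edges split into 5
red-available and 5 blue-available edges). -/
theorem stmt_15 (n : ℕ) (X : Finset (Fin n)) (M : SimpleGraph (Fin n))
    (hMY : ∀ u v, M.Adj u v → u ∉ X ∧ v ∉ X)
    (hM3 : ¬ HasNCycle M 3) (hM4 : ¬ HasNCycle M 4) (hM5 : ¬ HasNCycle M 5) :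
    ¬ ∃ (f : Fin 5 → Fin n) (E₁ E₂ : Finset (Sym2 (Fin n))),
        Function.Injective f ∧ Disjoint E₁ E₂ ∧
        E₁ ∪ E₂ = Finset.image (fun p : Fin 5 × Fin 5 => s(f p.1, f p.2))
          Finset.univ.offDiag ∧
        E₁.card = 5 ∧ E₂.card = 5 ∧
        (∀ e ∈ E₁, (∀ v ∈ e, v ∈ X) ∨ e ∈ M.edgeSet) ∧
        (∀ e ∈ E₂, ¬ (∀ v ∈ e, v ∈ X)) := by
  classical
  rintro ⟨f, E₁, E₂, hf, -, hunion, h1, h2, hE1, hE2⟩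
  have hrep : ∀ e : Sym2 (Fin 5), ∃ a b, e = s(a, b) :=
    fun e => Sym2.ind (fun a b => ⟨a, b, rfl⟩) e
  set T : Finset (Fin 5) := Finset.univ.filter (fun i => f i ∈ X) with hTdef
  have hmemT : ∀ i, i ∈ T ↔ f i ∈ X := by intro i; simp [hTdef]
  set S₅ : Finset (Sym2 (Fin 5)) := Finset.univ.offDiag.image Sym2.mk.uncurry with hS5def
  have hS5card : S₅.card = 10 := by
    rw [hS5def, Sym2.card_image_offDiag, Finset.card_univ, Fintype.card_fin]
    rfl
  have hinj : Function.Injective (Sym2.map f) := Sym2.map.injective hf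
  have hS : E₁ ∪ E₂ = S₅.image (Sym2.map f) := by
    rw [hunion, hS5def, Finset.image_image]
    rfl
  set D₁ : Finset (Sym2 (Fin 5)) := S₅.filter (fun e => Sym2.map f e ∈ E₁) with hD1def
  set D₂ : Finset (Sym2 (Fin 5)) := S₅.filter (fun e => Sym2.map f e ∈ E₂) with hD2def
  have himg1 : D₁.image (Sym2.map f) = E₁ := by
    apply Finset.Subset.antisymm
    · intro e he
      simp only [hD1def, Finset.mem_image, Finset.mem_filter] at he
      obtain ⟨e', ⟨-, h⟩, rfl⟩ := he
      exact h
    · intro e he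
      have : e ∈ S₅.image (Sym2.map f) := by rw [← hS]; exact Finset.mem_union_left _ he
      simp only [Finset.mem_image] at this
      obtain ⟨e', he', rfl⟩ := this
      exact Finset.mem_image_of_mem _ (Finset.mem_filter.mpr ⟨he', he⟩)
  have himg2 : D₂.image (Sym2.map f) = E₂ := by
    apply Finset.Subset.antisymm
    · intro e he
      simp only [hD2def, Finset.mem_image, Finset.mem_filter] at he
      obtain ⟨e', ⟨-, h⟩, rfl⟩ := he
      exact h
    · intro e he
      have : e ∈ S₅.image (Sym2.map f) := by rw [← hS]; exact Finset.mem_union_right _ he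
      simp only [Finset.mem_image] at this
      obtain ⟨e', he', rfl⟩ := this
      exact Finset.mem_image_of_mem _ (Finset.mem_filter.mpr ⟨he', he⟩)
  have hcard1 : D₁.card = 5 := by
    have h := Finset.card_image_of_injective D₁ hinj
    rw [himg1, h1] at h
    exact h.symm
  have hcard2 : D₂.card = 5 := by
    have h := Finset.card_image_of_injective D₂ hinj
    rw [himg2, h2] at h
    exact h.symm
  set A : Finset (Sym2 (Fin 5)) := S₅.filter (fun e => ∀ v ∈ e, v ∈ T) with hAdef
  have hS5mem : ∀ a b : Fin 5, s(a, b) ∈ S₅ ↔ a ≠ b := by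
    intro a b
    simp only [hS5def, Finset.mem_image, Finset.mem_offDiag, Finset.mem_univ, true_and,
      Prod.exists]
    constructor
    · rintro ⟨p1, p2, hne, he⟩
      rw [Function.uncurry_apply_pair, Sym2.eq_iff] at he
      rcases he with ⟨rfl, rfl⟩ | ⟨rfl, rfl⟩
      · exact hne
      · exact hne.symm
    · intro hne
      exact ⟨a, b, hne, rfl⟩
  have hA : A = T.offDiag.image Sym2.mk.uncurry := by
    ext e
    obtain ⟨a, b, rfl⟩ := hrep e
    simp only [hAdef, Finset.mem_filter, Finset.mem_image, Finset.mem_offDiag, Prod.exists,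
      Sym2.mem_iff, hS5mem]
    constructor
    · rintro ⟨hne, hT⟩
      exact ⟨a, b, ⟨hT a (Or.inl rfl), hT b (Or.inr rfl), hne⟩, rfl⟩
    · rintro ⟨p1, p2, ⟨hp1, hp2, hne⟩, he⟩
      rw [Function.uncurry_apply_pair, Sym2.eq_iff] at he
      rcases he with ⟨rfl, rfl⟩ | ⟨rfl, rfl⟩
      · exact ⟨hne, fun v hv => by rcases hv with rfl | rfl <;> assumption⟩
      · exact ⟨hne.symm, fun v hv => by rcases hv with rfl | rfl <;> assumption⟩
  have hAc : A.card = T.card.choose 2 := by rw [hA, Sym2.card_image_offDiag]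
  have hAD2 : A ⊆ S₅ \ D₂ := by
    intro e he
    rw [Finset.mem_sdiff]
    refine ⟨(Finset.mem_filter.mp he).1, fun heD2 => ?_⟩
    refine hE2 _ (Finset.mem_filter.mp heD2).2 ?_
    intro v hv
    rw [Sym2.mem_map] at hv
    obtain ⟨w, hw, rfl⟩ := hv
    exact (hmemT w).1 ((Finset.mem_filter.mp he).2 w hw)
  have hAle : A.card ≤ 5 := by
    have hD2S : D₂ ⊆ S₅ := by rw [hD2def]; exact Finset.filter_subset _ _
    have h := Finset.card_le_card hAD2
    rw [Finset.card_sdiff_of_subset hD2S] at h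
    omega
  have hx3 : T.card ≤ 3 := by
    by_contra h
    push_neg at h
    have h46 : Nat.choose 4 2 = 6 := rfl
    have h6 : 6 ≤ T.card.choose 2 := h46 ▸ Nat.choose_le_choose 2 h
    omega
  haveI hZne : Nonempty ↥(Tᶜ : Finset (Fin 5)) := by
    rw [← Fintype.card_pos_iff, Fintype.card_coe, Finset.card_compl]
    simp only [Fintype.card_fin]
    omega
  have hZcard : Fintype.card ↥(Tᶜ : Finset (Fin 5)) = 5 - T.card := by
    rw [Fintype.card_coe, Finset.card_compl]
    simp
  set M₅ : SimpleGraph ↥(Tᶜ : Finset (Fin 5)) :=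
    { Adj := fun a b => M.Adj (f a.1) (f b.1)
      symm := ⟨fun a b h => h.symm⟩
      loopless := ⟨fun a h => M.loopless.irrefl _ h⟩ } with hM5def
  have hM₅ac : M₅.IsAcyclic := by
    intro z c hcyc
    have h3 := hcyc.three_le_length
    have h5 : c.length ≤ 5 := le_trans (cycle_length_le hcyc) (by rw [hZcard]; omega)
    obtain ⟨F, hFinj, hFadj⟩ := cycle_hasNCycle hcyc
    have hN' : HasNCycle M c.length := by
      refine ⟨fun i => f (F i).1, ?_, ?_⟩
      · intro i hi j hj hij
        exact hFinj hi hj (Subtype.ext (hf hij))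
      · intro i hi
        exact hFadj i hi
    have : c.length = 3 ∨ c.length = 4 ∨ c.length = 5 := by omega
    rcases this with h | h | h <;> rw [h] at hN'
    exacts [hM3 hN', hM4 hN', hM5 hN']
  have hM₅le : M₅.edgeSet.ncard + 1 ≤ Fintype.card ↥(Tᶜ : Finset (Fin 5)) :=
    acyclic_bound M₅ hM₅ac
  set F₅ : Finset (Sym2 (Fin 5)) := D₁.filter (fun e => Sym2.map f e ∈ M.edgeSet) with hF5def
  have hkey : ∀ a b : Fin 5, s(a, b) ∈ F₅ → a ∈ (Tᶜ : Finset (Fin 5)) ∧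
      b ∈ (Tᶜ : Finset (Fin 5)) ∧ M.Adj (f a) (f b) := by
    intro a b hab
    have hM' : Sym2.map f s(a, b) ∈ M.edgeSet := (Finset.mem_filter.mp hab).2
    rw [Sym2.map_pair_eq, SimpleGraph.mem_edgeSet] at hM'
    obtain ⟨hu, hv⟩ := hMY _ _ hM'
    refine ⟨?_, ?_, hM'⟩ <;> rw [Finset.mem_compl, hmemT]
    · exact hu
    · exact hv
  obtain ⟨z₀⟩ := hZne
  have hF5le : F₅.card ≤ M₅.edgeSet.ncard := by
    rw [Set.ncard_eq_toFinset_card']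
    apply Finset.card_le_card_of_injOn
      (fun e => Sym2.map (fun i => if h : i ∈ (Tᶜ : Finset (Fin 5)) then
        (⟨i, h⟩ : ↥(Tᶜ : Finset (Fin 5))) else z₀) e)
    · intro e he
      obtain ⟨a, b, rfl⟩ := hrep e
      obtain ⟨ha, hb, hadj⟩ := hkey a b he
      beta_reduce
      rw [Finset.mem_coe, Sym2.map_pair_eq, dif_pos ha, dif_pos hb, Set.mem_toFinset]
      exact hadj
    · intro e he e' he' heq
      obtain ⟨a, b, rfl⟩ := hrep e
      obtain ⟨c, d, rfl⟩ := hrep e'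
      obtain ⟨ha, hb, -⟩ := hkey a b he
      obtain ⟨hc, hd, -⟩ := hkey c d he'
      simp only [Sym2.map_pair_eq, dif_pos ha, dif_pos hb, dif_pos hc, dif_pos hd,
        Sym2.eq_iff] at heq
      rw [Sym2.eq_iff]
      rcases heq with ⟨hh1, hh2⟩ | ⟨hh1, hh2⟩
      · exact Or.inl ⟨congrArg Subtype.val hh1, congrArg Subtype.val hh2⟩
      · exact Or.inr ⟨congrArg Subtype.val hh1, congrArg Subtype.val hh2⟩
  have hD1sub : D₁ ⊆ A ∪ F₅ := by
    intro e he
    have heS : e ∈ S₅ := (Finset.mem_filter.mp he).1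
    have he1 : Sym2.map f e ∈ E₁ := (Finset.mem_filter.mp he).2
    rcases hE1 _ he1 with hX | hM
    · refine Finset.mem_union_left _ (Finset.mem_filter.mpr ⟨heS, ?_⟩)
      intro v hv
      rw [hmemT]
      exact hX (f v) (Sym2.mem_map.mpr ⟨v, hv, rfl⟩)
    · exact Finset.mem_union_right _ (Finset.mem_filter.mpr ⟨he, hM⟩)
  have hfinal : (5 : ℕ) ≤ A.card + F₅.card := by
    calc (5 : ℕ) = D₁.card := hcard1.symm
    _ ≤ (A ∪ F₅).card := Finset.card_le_card hD1sub
    _ ≤ A.card + F₅.card := Finset.card_union_le _ _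
  have hFver : F₅.card + 1 ≤ 5 - T.card := by
    rw [hZcard] at hM₅le
    omega
  have hxcases : T.card = 0 ∨ T.card = 1 ∨ T.card = 2 ∨ T.card = 3 := by omega
  rcases hxcases with h | h | h | h <;> rw [h] at hAc hFver <;>
    simp only [Nat.choose] at hAc <;> omega
end

section
/- Let k ≥ 1 and let K_{2t} (t ≥ 3k+1) have its edges 2-colored with vertex partition X ⊔ Y, |X| = |Y| = t, such that all edges inside X are red and all edges inside Y and between X and Y are blue. Then K_{2t} contains a (4k+2)-cycle with exactly 2k+1 red edges and 2k+1 blue edges. -/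
/-- In K_{2t} (t ≥ 3k+1) 2-colored with X ⊔ Y, |X| = |Y| = t, all
edges inside X red, all other edges blue, there is a (4k+2)-cycle with exactly
2k+1 red and 2k+1 blue edges. -/
theorem stmt_17 (k t : ℕ) (hk : 1 ≤ k) (ht : 3 * k + 1 ≤ t)
    (X : Finset (Fin (2 * t))) (hX : X.card = t) :
    ∃ g : ℕ → Fin (2 * t), Set.InjOn g (Set.Iio (4 * k + 2)) ∧
      ((Finset.range (4 * k + 2)).filter
        (fun i => g i ∈ X ∧ g ((i + 1) % (4 * k + 2)) ∈ X)).card = 2 * k + 1 ∧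
      ((Finset.range (4 * k + 2)).filter
        (fun i => ¬ (g i ∈ X ∧ g ((i + 1) % (4 * k + 2)) ∈ X))).card = 2 * k + 1 := by
  have ht0 : 0 < t := by omega
  have hXc : Xᶜ.card = t := by
    rw [Finset.card_compl, hX]
    simp [Fintype.card_fin]
    omega
  set f := X.orderEmbOfFin hX with hf
  set h := Xᶜ.orderEmbOfFin hXc with hh
  set g : ℕ → Fin (2 * t) := fun i =>
    if i < 2 * k + 2 then f ⟨i % t, Nat.mod_lt _ ht0⟩
    else h ⟨(i - (2 * k + 2)) % t, Nat.mod_lt _ ht0⟩ with hg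
  have hfX : ∀ j, f j ∈ X := fun j => X.orderEmbOfFin_mem hX j
  have hhX : ∀ j, h j ∉ X := by
    intro j
    have := Xᶜ.orderEmbOfFin_mem hXc j
    exact Finset.mem_compl.mp this
  -- membership characterization
  have hmem : ∀ i, g i ∈ X ↔ i < 2 * k + 2 := by
    intro i
    by_cases hi : i < 2 * k + 2
    · simp [hg, hi, hfX]
    · simp [hg, hi, hhX]
  have hinj : Set.InjOn g (Set.Iio (4 * k + 2)) := by
    intro i hi j hj hij
    simp only [Set.mem_Iio] at hi hj
    by_cases h1 : i < 2 * k + 2 <;> by_cases h2 : j < 2 * k + 2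
    · simp only [hg, h1, h2, if_pos] at hij
      have := f.injective hij
      have : i % t = j % t := congrArg Fin.val this
      rw [Nat.mod_eq_of_lt (by omega), Nat.mod_eq_of_lt (by omega)] at this
      omega
    · exfalso
      have hi' := (hmem i).mpr h1
      have hj' : g j ∉ X := fun hx => h2 ((hmem j).mp hx)
      rw [hij] at hi'
      exact hj' hi'
    · exfalso
      have hj' := (hmem j).mpr h2
      have hi' : g i ∉ X := fun hx => h1 ((hmem i).mp hx)
      rw [← hij] at hj'
      exact hi' hj'
    · simp only [hg, h1, h2, if_neg, if_false] at hij
      have := h.injective hij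
      have : (i - (2 * k + 2)) % t = (j - (2 * k + 2)) % t := congrArg Fin.val this
      rw [Nat.mod_eq_of_lt (by omega), Nat.mod_eq_of_lt (by omega)] at this
      omega
  refine ⟨g, hinj, ?_, ?_⟩
  · have : (Finset.range (4 * k + 2)).filter
        (fun i => g i ∈ X ∧ g ((i + 1) % (4 * k + 2)) ∈ X) = Finset.range (2 * k + 1) := by
      ext a
      simp only [Finset.mem_filter, Finset.mem_range, hmem]
      constructor
      · rintro ⟨ha, h1, h2⟩
        rcases Nat.lt_or_ge (a + 1) (4 * k + 2) with hc | hc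
        · rw [Nat.mod_eq_of_lt hc] at h2; omega
        · have : a = 4 * k + 1 := by omega
          omega
      · intro ha
        have h1 : (a + 1) % (4 * k + 2) = a + 1 := Nat.mod_eq_of_lt (by omega)
        rw [h1]
        omega
    rw [this, Finset.card_range]
  · have := Finset.card_filter_add_card_filter_not (s := Finset.range (4 * k + 2))
      (p := fun i => g i ∈ X ∧ g ((i + 1) % (4 * k + 2)) ∈ X)
    rw [Finset.card_range] at this
    have h1 : (Finset.range (4 * k + 2)).filter
        (fun i => g i ∈ X ∧ g ((i + 1) % (4 * k + 2)) ∈ X) = Finset.range (2 * k + 1) := by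
      ext a
      simp only [Finset.mem_filter, Finset.mem_range, hmem]
      constructor
      · rintro ⟨ha, hb, h2⟩
        rcases Nat.lt_or_ge (a + 1) (4 * k + 2) with hc | hc
        · rw [Nat.mod_eq_of_lt hc] at h2; omega
        · have : a = 4 * k + 1 := by omega
          omega
      · intro ha
        have hb : (a + 1) % (4 * k + 2) = a + 1 := Nat.mod_eq_of_lt (by omega)
        rw [hb]
        omega
    rw [h1, Finset.card_range] at this
    omega
end

section
/- Let k ≥ 1, t ≥ 3k+1, and consider K_{2t} with vertex partition X ⊔ Y, |X| = |Y| = t, where all edges within X and within Y are red and all edges between X and Y are blue, except one edge e = uv with u,v ∈ X which is bicolored (may be used as red or blue). Then there is a (4k+2)-cycle through e which, choosing e blue, has exactly 2k+1 red edges and 2k+1 blue edges. -/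
private def eFn (t : ℕ) (u v : Fin (2 * t)) (bb aa : ℕ → Fin (2 * t)) : ℕ → Fin (2 * t) :=
  fun j => if j < t then bb j else if j = t then u else if j = t + 1 then v else aa (j - (t + 2))

private def iotaFn (k t : ℕ) : ℕ → ℕ := fun i =>
  if i = 0 then t
  else if i = 1 then t + 1
  else if i ≤ 2 * k + 3 then i - 2
  else if i % 2 = 0 then t + 2 + (i - (2 * k + 4)) / 2
  else 2 * k + 2 + (i - (2 * k + 5)) / 2

/-- In K_{2t} (t ≥ 3k+1, k ≥ 1) with partition X ⊔ Y, |X| = |Y| = t,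
edges within X and within Y red, edges across blue, and one bicolored edge
e = uv inside X, there is a (4k+2)-cycle through e which, taking e blue, has
exactly 2k+1 red and 2k+1 blue edges (i.e. apart from e, exactly 2k+1 red edges
and 2k blue edges). -/
theorem stmt_18 (k t : ℕ) (hk : 1 ≤ k) (ht : 3 * k + 1 ≤ t)
    (X : Finset (Fin (2 * t))) (hX : X.card = t)
    (u v : Fin (2 * t)) (hu : u ∈ X) (hv : v ∈ X) (huv : u ≠ v) :
    ∃ g : ℕ → Fin (2 * t), Set.InjOn g (Set.Iio (4 * k + 2)) ∧
      g 0 = u ∧ g 1 = v ∧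
      (((Finset.range (4 * k + 2)).erase 0).filter
        (fun i => (g i ∈ X ↔ g ((i + 1) % (4 * k + 2)) ∈ X))).card = 2 * k + 1 ∧
      (((Finset.range (4 * k + 2)).erase 0).filter
        (fun i => ¬ (g i ∈ X ↔ g ((i + 1) % (4 * k + 2)) ∈ X))).card = 2 * k := by
  classical
  have ht0 : 0 < t := by omega
  have ht2 : 0 < t - 2 := by omega
  have hYcard : Xᶜ.card = t := by
    rw [Finset.card_compl, hX, Fintype.card_fin]; omega
  have hsub : ({u, v} : Finset (Fin (2 * t))) ⊆ X := by
    intro x hx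
    simp only [Finset.mem_insert, Finset.mem_singleton] at hx
    rcases hx with h | h <;> subst h <;> assumption
  have hscard : (X \ {u, v}).card = t - 2 := by
    rw [Finset.card_sdiff_of_subset hsub, hX,
      Finset.card_insert_of_notMem (by simp [huv]), Finset.card_singleton]
  set b : ℕ → Fin (2 * t) :=
    fun j => Xᶜ.orderEmbOfFin hYcard ⟨j % t, Nat.mod_lt _ ht0⟩ with hbdef
  set a : ℕ → Fin (2 * t) :=
    fun j => (X \ {u, v}).orderEmbOfFin hscard ⟨j % (t - 2), Nat.mod_lt _ ht2⟩ with hadef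
  have hbY : ∀ j, b j ∉ X := by
    intro j
    have h := Finset.orderEmbOfFin_mem Xᶜ hYcard ⟨j % t, Nat.mod_lt _ ht0⟩
    rw [Finset.mem_compl] at h
    exact h
  have haX : ∀ j, a j ∈ X ∧ a j ≠ u ∧ a j ≠ v := by
    intro j
    have h := Finset.orderEmbOfFin_mem (X \ {u, v}) hscard ⟨j % (t - 2), Nat.mod_lt _ ht2⟩
    simp only [Finset.mem_sdiff, Finset.mem_insert, Finset.mem_singleton] at h
    exact ⟨h.1, fun hh => h.2 (Or.inl hh), fun hh => h.2 (Or.inr hh)⟩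
  have hbinj : ∀ j1 j2, j1 < t → j2 < t → b j1 = b j2 → j1 = j2 := by
    intro j1 j2 h1 h2 h
    rw [hbdef] at h
    have h' : j1 % t = j2 % t :=
      congrArg Fin.val ((Xᶜ.orderEmbOfFin hYcard).injective h)
    rwa [Nat.mod_eq_of_lt h1, Nat.mod_eq_of_lt h2] at h'
  have hainj : ∀ j1 j2, j1 < t - 2 → j2 < t - 2 → a j1 = a j2 → j1 = j2 := by
    intro j1 j2 h1 h2 h
    rw [hadef] at h
    have h' : j1 % (t - 2) = j2 % (t - 2) :=
      congrArg Fin.val (((X \ {u, v}).orderEmbOfFin hscard).injective h)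
    rwa [Nat.mod_eq_of_lt h1, Nat.mod_eq_of_lt h2] at h'
  have hιbound : ∀ i, i ≤ 4 * k + 1 → iotaFn k t i ≤ t + k := by
    intro i hi; unfold iotaFn; split_ifs <;> omega
  have hιX : ∀ i, i ≤ 4 * k + 1 →
      (t ≤ iotaFn k t i ↔ (i ≤ 1 ∨ (2 * k + 4 ≤ i ∧ i % 2 = 0))) := by
    intro i hi; unfold iotaFn; split_ifs <;> omega
  have hιinj : ∀ i j, i ≤ 4 * k + 1 → j ≤ 4 * k + 1 →
      iotaFn k t i = iotaFn k t j → i = j := by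
    intro i j hi hj h; unfold iotaFn at h; split_ifs at h <;> omega
  have heX : ∀ j, j ≤ t + k → (eFn t u v b a j ∈ X ↔ t ≤ j) := by
    intro j hj
    unfold eFn
    split_ifs with h1 h2 h3
    · simp only [hbY j, false_iff]; omega
    · simp only [hu, true_iff]; omega
    · simp only [hv, true_iff]; omega
    · simp only [(haX _).1, true_iff]; omega
  have heinj : ∀ j1 j2, j1 ≤ t + k → j2 ≤ t + k →
      eFn t u v b a j1 = eFn t u v b a j2 → j1 = j2 := by
    intro j1 j2 h1 h2 h
    unfold eFn at h
    split_ifs at h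
    all_goals first
      | omega
      | exact hbinj _ _ ‹_› ‹_› h
      | exact absurd h huv
      | exact absurd h.symm huv
      | exact absurd hu (h ▸ hbY _)
      | exact absurd hu (h.symm ▸ hbY _)
      | exact absurd hv (h ▸ hbY _)
      | exact absurd hv (h.symm ▸ hbY _)
      | exact absurd (haX _).1 (h.symm ▸ hbY _)
      | exact absurd (haX _).1 (h ▸ hbY _)
      | exact absurd h.symm (haX _).2.1
      | exact absurd h (haX _).2.1
      | exact absurd h.symm (haX _).2.2
      | exact absurd h (haX _).2.2
      | (have := hainj _ _ (by omega) (by omega) h; omega)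
  set g : ℕ → Fin (2 * t) := fun i => eFn t u v b a (iotaFn k t i) with hgdef
  have hmem : ∀ i, i ≤ 4 * k + 1 →
      (g i ∈ X ↔ (i ≤ 1 ∨ (2 * k + 4 ≤ i ∧ i % 2 = 0))) := by
    intro i hi
    rw [hgdef]
    rw [heX _ (hιbound i hi), hιX i hi]
  have hg0 : g 0 = u := by
    have h1 : iotaFn k t 0 = t := by simp [iotaFn]
    rw [hgdef]
    show eFn t u v b a (iotaFn k t 0) = u
    rw [h1]
    unfold eFn
    rw [if_neg (by omega), if_pos rfl]
  have hg1 : g 1 = v := by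
    have h1 : iotaFn k t 1 = t + 1 := by simp [iotaFn]
    rw [hgdef]
    show eFn t u v b a (iotaFn k t 1) = v
    rw [h1]
    unfold eFn
    rw [if_neg (by omega), if_neg (by omega), if_pos rfl]
  have hkey : ∀ i ∈ (Finset.range (4 * k + 2)).erase 0,
      ((g i ∈ X ↔ g ((i + 1) % (4 * k + 2)) ∈ X) ↔ (2 ≤ i ∧ i ≤ 2 * k + 2)) := by
    intro i hi
    simp only [Finset.mem_erase, Finset.mem_range] at hi
    obtain ⟨h0, hN⟩ := hi
    rcases Nat.lt_or_ge i (4 * k + 1) with hlt | hge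
    · rw [Nat.mod_eq_of_lt (by omega), hmem i (by omega), hmem (i + 1) (by omega)]
      omega
    · have hi41 : i = 4 * k + 1 := by omega
      subst hi41
      have hmod : (4 * k + 1 + 1) % (4 * k + 2) = 0 := by
        rw [show 4 * k + 1 + 1 = 4 * k + 2 from rfl, Nat.mod_self]
      rw [hmod, hg0, hmem _ (le_refl _)]
      simp only [hu, iff_true]
      omega
  have hfilter1 : ((Finset.range (4 * k + 2)).erase 0).filter
      (fun i => (g i ∈ X ↔ g ((i + 1) % (4 * k + 2)) ∈ X)) = Finset.Icc 2 (2 * k + 2) := by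
    ext i
    rw [Finset.mem_filter]
    constructor
    · rintro ⟨hi, hp⟩
      rw [Finset.mem_Icc]
      exact (hkey i hi).mp hp
    · intro hi
      rw [Finset.mem_Icc] at hi
      have hmem' : i ∈ (Finset.range (4 * k + 2)).erase 0 := by
        simp only [Finset.mem_erase, Finset.mem_range]; omega
      exact ⟨hmem', (hkey i hmem').mpr hi⟩
  have hcard1 : (((Finset.range (4 * k + 2)).erase 0).filter
      (fun i => (g i ∈ X ↔ g ((i + 1) % (4 * k + 2)) ∈ X))).card = 2 * k + 1 := by
    rw [hfilter1, Nat.card_Icc]; omega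
  refine ⟨g, ?_, hg0, hg1, hcard1, ?_⟩
  · intro i hi j hj h
    simp only [Set.mem_Iio] at hi hj
    exact hιinj i j (by omega) (by omega)
      (heinj _ _ (hιbound i (by omega)) (hιbound j (by omega)) h)
  · have htot := Finset.card_filter_add_card_filter_not
      (s := (Finset.range (4 * k + 2)).erase 0)
      (p := fun i => (g i ∈ X ↔ g ((i + 1) % (4 * k + 2)) ∈ X))
    have hec : ((Finset.range (4 * k + 2)).erase 0).card = 4 * k + 1 := by
      rw [Finset.card_erase_of_mem (by simp), Finset.card_range]
      omega
    omega
end
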